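/- If a density matrix ρ on a d-dimensional space admits the decomposition ρ = ∑_i (p_i/V_i) Π_i, where {Π_i} is a POVM, p_i = Tr[Π_i ρ], and V_i = Tr[Π_i] > 0, then the observational entropy equals the von Neumann entropy: -∑_i p_i ln(p_i/V_i) = -Tr[ρ ln ρ]. -/

import Mathlib

open Matrix BigOperators ComplexOrder

/-- The matrix logarithm of a Hermitian matrix, via the spectral theorem. -/
noncomputable def hermLog {d : ℕ} {A : Matrix (Fin d) (Fin d) ℂ} (hA : A.IsHermitian) :
    Matrix (Fin d) (Fin d) ℂ :=
  (hA.eigenvectorUnitary : Matrix (Fin d) (Fin d) ℂ) *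
    Matrix.diagonal (fun x => ((Real.log (hA.eigenvalues x) : ℝ) : ℂ)) *
    (hA.eigenvectorUnitary : Matrix (Fin d) (Fin d) ℂ)ᴴ

/-- if a density matrix admits the decomposition `ρ = ∑ i (p i / V i) • Π i`
for a POVM `{Π i}`, then the observational entropy equals the von Neumann entropy
`S(ρ) = -Tr[ρ ln ρ]`. -/
theorem obs_entropy_eq_vN_of_decomposition {d : ℕ} {ι : Type*} [Fintype ι]
    (P : ι → Matrix (Fin d) (Fin d) ℂ)
    (hP : ∀ i, (P i).PosSemidef) (hsum : ∑ i, P i = 1)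
    (hV : ∀ i, 0 < (P i).trace.re)
    (ρ : Matrix (Fin d) (Fin d) ℂ) (hρ : ρ.PosSemidef) (hρtr : ρ.trace = 1)
    (hdec : ρ = ∑ i, ((((P i * ρ).trace.re / (P i).trace.re : ℝ)) : ℂ) • P i) :
    -∑ i, (P i * ρ).trace.re * Real.log ((P i * ρ).trace.re / (P i).trace.re)
      = -(ρ * hermLog hρ.isHermitian).trace.re := by
  classical
  have hH : ρ.IsHermitian := hρ.isHermitian
  set U : Matrix (Fin d) (Fin d) ℂ := (hH.eigenvectorUnitary : Matrix (Fin d) (Fin d) ℂ) with hUdef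
  set lam : Fin d → ℝ := hH.eigenvalues with hlamdef
  have hUmem := hH.eigenvectorUnitary.2
  rw [Unitary.mem_iff] at hUmem
  have hUU : Uᴴ * U = 1 := by rw [← Matrix.star_eq_conjTranspose]; exact hUmem.1
  have hUU' : U * Uᴴ = 1 := by rw [← Matrix.star_eq_conjTranspose]; exact hUmem.2
  set D : Matrix (Fin d) (Fin d) ℂ := Matrix.diagonal (fun k => (lam k : ℂ)) with hDdef
  have hspec : ρ = U * D * Uᴴ := by
    exact hH.spectral_theorem
  -- trace of M * diagonal
  have trdiag : ∀ (M : Matrix (Fin d) (Fin d) ℂ) (f : Fin d → ℂ),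
      (M * Matrix.diagonal f).trace = ∑ k, M k k * f k := by
    intro M f
    simp [Matrix.trace, Matrix.diag, Matrix.mul_diagonal]
  set a : ι → Fin d → ℝ := fun i k => ((Uᴴ * P i * U) k k).re with hadef
  have ha_nonneg : ∀ i k, 0 ≤ a i k := by
    intro i k
    have h1 : (Uᴴ * P i * U).PosSemidef := (hP i).conjTranspose_mul_mul_same U
    have h2 := (posSemidef_iff_dotProduct_mulVec.mp h1).2 (Pi.single k 1)
    have h3 : dotProduct (star (Pi.single k 1)) ((Uᴴ * P i * U) *ᵥ Pi.single k 1)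
        = (Uᴴ * P i * U) k k := by
      simp [dotProduct, Matrix.mulVec, Pi.single_apply]
    rw [h3] at h2
    exact (Complex.le_def.mp h2).1
  have key_p : ∀ i, (P i * ρ).trace.re = ∑ k, a i k * lam k := by
    intro i
    have h1 : (P i * ρ).trace = ((Uᴴ * P i * U) * D).trace := by
      rw [hspec, show P i * (U * D * Uᴴ) = (P i * U * D) * Uᴴ by noncomm_ring,
        Matrix.trace_mul_comm, show Uᴴ * (P i * U * D) = (Uᴴ * P i * U) * D by noncomm_ring]
    rw [h1, hDdef, trdiag, Complex.re_sum]
    refine Finset.sum_congr rfl fun k _ => ?_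
    simp [Complex.mul_re]
    exact Or.inl rfl
  have key_V : ∀ i, (P i).trace.re = ∑ k, a i k := by
    intro i
    have h1 : (P i).trace = (Uᴴ * P i * U).trace := by
      rw [Matrix.trace_mul_comm, show U * (Uᴴ * P i) = (U * Uᴴ) * P i by noncomm_ring, hUU',
        one_mul]
    rw [h1, Matrix.trace, Complex.re_sum]
    rfl
  have key_sum : ∀ k, ∑ i, a i k = 1 := by
    intro k
    have h1 : ∑ i, (Uᴴ * P i * U) = 1 := by
      rw [← Finset.sum_mul, ← Finset.mul_sum, hsum, mul_one, hUU]
    have h2 : ∑ i, (Uᴴ * P i * U) k k = 1 := by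
      rw [← Matrix.sum_apply k k Finset.univ fun i => Uᴴ * P i * U, h1, Matrix.one_apply_eq]
    calc ∑ i, a i k = (∑ i, (Uᴴ * P i * U) k k).re := by rw [Complex.re_sum]
    _ = 1 := by rw [h2]; rfl
  set c : ι → ℝ := fun i => (P i * ρ).trace.re / (P i).trace.re with hcdef
  have key_lam : ∀ k, lam k = ∑ i, c i * a i k := by
    intro k
    have h1 : D = ∑ i, ((c i : ℝ) : ℂ) • (Uᴴ * P i * U) := by
      have : Uᴴ * ρ * U = D := by
        rw [hspec, show Uᴴ * (U * D * Uᴴ) * U = (Uᴴ * U) * D * (Uᴴ * U) by noncomm_ring, hUU,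
          one_mul, mul_one]
      rw [← this]
      rw [hdec]  -- hope: conjugation distributes
      rw [Finset.mul_sum, Finset.sum_mul]
      refine Finset.sum_congr rfl fun i _ => ?_
      rw [Matrix.mul_smul, Matrix.smul_mul]
    have h2 : (lam k : ℂ) = ∑ i, ((c i : ℝ) : ℂ) * (Uᴴ * P i * U) k k := by
      have := congrArg (fun M : Matrix (Fin d) (Fin d) ℂ => M k k) h1
      simpa [Matrix.sum_apply, Matrix.diagonal_apply_eq, hDdef] using this
    have := congrArg Complex.re h2
    simpa [Complex.re_sum, Complex.mul_re] using this
  set L : Matrix (Fin d) (Fin d) ℂ := Matrix.diagonal (fun k => ((Real.log (lam k) : ℝ) : ℂ)) with hLdef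
  have hlam_nonneg : ∀ k, 0 ≤ lam k := fun k => hρ.eigenvalues_nonneg k
  have key_RHS : (ρ * (U * L * Uᴴ)).trace.re = ∑ k, lam k * Real.log (lam k) := by
    have h1 : ρ * (U * L * Uᴴ) = U * (D * L) * Uᴴ := by
      rw [hspec, show (U * D * Uᴴ) * (U * L * Uᴴ) = U * (D * ((Uᴴ * U) * L)) * Uᴴ by noncomm_ring,
        hUU, one_mul, mul_assoc]
    have h2 : (U * (D * L) * Uᴴ).trace = (D * L).trace := by
      rw [Matrix.trace_mul_comm, show Uᴴ * (U * (D * L)) = (Uᴴ * U) * (D * L) by noncomm_ring,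
        hUU, one_mul]
    rw [h1, h2, hLdef, trdiag, Complex.re_sum]
    refine Finset.sum_congr rfl fun k _ => ?_
    simp [hDdef, Complex.mul_re]
  have hp_nonneg : ∀ i, 0 ≤ (P i * ρ).trace.re := by
    intro i
    rw [key_p i]
    exact Finset.sum_nonneg fun k _ => mul_nonneg (ha_nonneg i k) (hlam_nonneg k)
  have hc_nonneg : ∀ i, 0 ≤ c i := fun i => div_nonneg (hp_nonneg i) (hV i).le
  have hpc : ∀ i, (P i * ρ).trace.re = c i * (P i).trace.re :=
    fun i => (div_mul_cancel₀ _ (hV i).ne').symm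
  -- Direction A: convexity of x ↦ x log x
  have dirA : ∑ k, lam k * Real.log (lam k) ≤ ∑ i, (P i * ρ).trace.re * Real.log (c i) := by
    have h1 : ∀ k, lam k * Real.log (lam k) ≤ ∑ i, a i k * (c i * Real.log (c i)) := by
      intro k
      have hJ := Real.convexOn_mul_log.map_sum_le (t := Finset.univ) (w := fun i => a i k)
        (p := c) (fun i _ => ha_nonneg i k) (key_sum k) (fun i _ => hc_nonneg i)
      have hsum' : ∑ i, (a i k) • c i = lam k := by
        rw [key_lam k]; exact Finset.sum_congr rfl fun i _ => by rw [smul_eq_mul, mul_comm]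
      rw [hsum'] at hJ
      simpa [smul_eq_mul] using hJ
    calc ∑ k, lam k * Real.log (lam k) ≤ ∑ k, ∑ i, a i k * (c i * Real.log (c i)) :=
          Finset.sum_le_sum fun k _ => h1 k
      _ = ∑ i, (∑ k, a i k) * (c i * Real.log (c i)) := by
          rw [Finset.sum_comm]
          exact Finset.sum_congr rfl fun i _ => (Finset.sum_mul ..).symm
      _ = ∑ i, (P i * ρ).trace.re * Real.log (c i) := by
          refine Finset.sum_congr rfl fun i _ => ?_
          rw [← key_V i, hpc i]; ring
  -- Direction B: concavity of log
  have dirB : ∑ i, (P i * ρ).trace.re * Real.log (c i) ≤ ∑ k, lam k * Real.log (lam k) := by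
    have h2 : ∑ i, (P i * ρ).trace.re * Real.log (c i)
        = ∑ k, lam k * ∑ i, a i k * Real.log (c i) := by
      calc ∑ i, (P i * ρ).trace.re * Real.log (c i)
          = ∑ i, ∑ k, a i k * lam k * Real.log (c i) := by
            refine Finset.sum_congr rfl fun i _ => ?_
            rw [key_p i, Finset.sum_mul]
        _ = ∑ k, lam k * ∑ i, a i k * Real.log (c i) := by
            rw [Finset.sum_comm]
            refine Finset.sum_congr rfl fun k _ => ?_
            rw [Finset.mul_sum]
            exact Finset.sum_congr rfl fun i _ => by ring
    rw [h2]
    refine Finset.sum_le_sum fun k _ => ?_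
    rcases eq_or_lt_of_le (hlam_nonneg k) with h0 | hpos
    · simp [← h0]
    · have hsub : ∀ i, c i = 0 → a i k = 0 := by
        intro i hci
        have hp0 : ∑ k', a i k' * lam k' = 0 := by
          rw [← key_p i, hpc i, hci, zero_mul]
        have := (Finset.sum_eq_zero_iff_of_nonneg fun k' _ =>
          mul_nonneg (ha_nonneg i k') (hlam_nonneg k')).mp hp0 k (Finset.mem_univ k)
        rcases mul_eq_zero.mp this with h | h
        · exact h
        · exact absurd h hpos.ne'
      set t : Finset ι := Finset.univ.filter (fun i => c i ≠ 0) with htdef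
      have hext : ∀ g : ι → ℝ, (∀ i, a i k = 0 → a i k * g i = 0) →
          ∑ i ∈ t, a i k * g i = ∑ i, a i k * g i := by
        intro g hg
        refine Finset.sum_subset (Finset.subset_univ t) fun i _ hi => ?_
        have : c i = 0 := by
          by_contra hne
          exact hi (Finset.mem_filter.mpr ⟨Finset.mem_univ i, hne⟩)
        exact hg i (hsub i this)
      have hw1 : ∑ i ∈ t, a i k = 1 := by
        rw [← key_sum k]
        have := hext (fun _ => 1) (fun i h => by rw [h, zero_mul])
        simpa using this
      have hlk : ∑ i ∈ t, a i k * c i = lam k := by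
        rw [key_lam k]
        rw [hext c (fun i h => by rw [h, zero_mul])]
        exact Finset.sum_congr rfl fun i _ => mul_comm _ _
      have hjen := (strictConcaveOn_log_Ioi.concaveOn).le_map_sum (t := t)
        (w := fun i => a i k) (p := c) (fun i _ => ha_nonneg i k) hw1
        (fun i hi => lt_of_le_of_ne (hc_nonneg i) (Ne.symm (Finset.mem_filter.mp hi).2))
      have hjen' : ∑ i ∈ t, a i k * Real.log (c i) ≤ Real.log (lam k) := by
        calc ∑ i ∈ t, a i k * Real.log (c i) ≤ Real.log (∑ i ∈ t, a i k • c i) := by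
              simpa [smul_eq_mul] using hjen
          _ = Real.log (lam k) := by
              rw [show ∑ i ∈ t, a i k • c i = lam k from by simpa [smul_eq_mul] using hlk]
      calc lam k * ∑ i, a i k * Real.log (c i)
          = lam k * ∑ i ∈ t, a i k * Real.log (c i) := by
            rw [hext (fun i => Real.log (c i)) (fun i h => by rw [h, zero_mul])]
        _ ≤ lam k * Real.log (lam k) := by
            exact mul_le_mul_of_nonneg_left hjen' (hlam_nonneg k)
  have final : ∑ i, (P i * ρ).trace.re * Real.log (c i) = ∑ k, lam k * Real.log (lam k) :=
    le_antisymm dirB dirA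
  have hlogeq : hermLog hρ.isHermitian = U * L * Uᴴ := rfl
  rw [hlogeq, key_RHS, neg_inj]
  exact final
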